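/- Let d ≥ 1, k ≥ 2d+1 and m ≥ d be integers, and let G be the graph consisting of a clique S = {s₁, …, s_k} of size k together with, for each i ∈ {1, …, k}, a set of m additional vertices each adjacent exactly to sᵢ (degree-one pendant vertices). Then the number of maximal d-cuts of G (counted as distinct edge cuts) is exactly (binom(m, d))^k; these are precisely the edge cuts that contain, for each sᵢ, exactly d of the edges between sᵢ and its pendant neighbors and no other edges. -/
import Mathlib


variable {V : Type*}

/-- A `d`-cut of a simple graph `G`: a partition `(A, B)` of the vertex set into two
nonempty parts such that every vertex of `A` has at most `d` neighbors in `B` and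
every vertex of `B` has at most `d` neighbors in `A`. -/
def IsDCut (G : SimpleGraph V) (d : ℕ) (A B : Set V) : Prop :=
  A.Nonempty ∧ B.Nonempty ∧ Disjoint A B ∧ A ∪ B = Set.univ ∧
    (∀ v ∈ A, (G.neighborSet v ∩ B).ncard ≤ d) ∧
    (∀ v ∈ B, (G.neighborSet v ∩ A).ncard ≤ d)

/-- A vertex set `T` is monochromatic if every `d`-cut of `G` has `T` entirely on one side. -/
def Monochromatic (G : SimpleGraph V) (d : ℕ) (T : Set V) : Prop :=
  ∀ A B : Set V, IsDCut G d A B → T ⊆ A ∨ T ⊆ B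

/-- The edge cut of a cut `(A, B)`: the set of edges of `G` with one endpoint in `A`
and the other endpoint in `B`. -/
def edgeCut (G : SimpleGraph V) (A B : Set V) : Set (Sym2 V) :=
  {e | e ∈ G.edgeSet ∧ ∃ u v, e = s(u, v) ∧ u ∈ A ∧ v ∈ B}

/-- A minimal `d`-cut: no `d`-cut has an edge cut that is a proper subset of its edge cut. -/
def IsMinimalDCut (G : SimpleGraph V) (d : ℕ) (A B : Set V) : Prop :=
  IsDCut G d A B ∧ ∀ A' B' : Set V, IsDCut G d A' B' → ¬ edgeCut G A' B' ⊂ edgeCut G A B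

/-- A maximal `d`-cut: no `d`-cut has an edge cut that properly contains its edge cut. -/
def IsMaximalDCut (G : SimpleGraph V) (d : ℕ) (A B : Set V) : Prop :=
  IsDCut G d A B ∧ ∀ A' B' : Set V, IsDCut G d A' B' → ¬ edgeCut G A B ⊂ edgeCut G A' B'

/-- The graph consisting of a clique `S = {s₁, …, s_k}` (the vertices `Sum.inl i`)
together with, for each `i`, a set of `m` pendant vertices `Sum.inr (i, j)` each
adjacent exactly to `sᵢ`. -/
def starCliqueGraph (k m : ℕ) : SimpleGraph (Fin k ⊕ Fin k × Fin m) :=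
  SimpleGraph.fromRel (fun a b =>
    (∃ i j : Fin k, a = Sum.inl i ∧ b = Sum.inl j) ∨
    (∃ (i : Fin k) (j : Fin m), a = Sum.inl i ∧ b = Sum.inr (i, j)))


namespace SCG
variable {k m : ℕ}

lemma adj_ll {i j : Fin k} : (starCliqueGraph k m).Adj (Sum.inl i) (Sum.inl j) ↔ i ≠ j := by
  simp [starCliqueGraph, SimpleGraph.fromRel_adj]

lemma adj_lr {i i' : Fin k} {j : Fin m} :
    (starCliqueGraph k m).Adj (Sum.inl i) (Sum.inr (i', j)) ↔ i = i' := by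
  simp only [starCliqueGraph, SimpleGraph.fromRel_adj]
  constructor
  · rintro ⟨-, h⟩
    rcases h with (⟨a,b,ha,hb⟩|⟨a,b,ha,hb⟩)|(⟨a,b,ha,hb⟩|⟨a,b,ha,hb⟩) <;> simp_all
  · rintro rfl; simp

lemma adj_rr {p q : Fin k × Fin m} : ¬ (starCliqueGraph k m).Adj (Sum.inr p) (Sum.inr q) := by
  simp [starCliqueGraph, SimpleGraph.fromRel_adj]

lemma adj_rl {i i' : Fin k} {j : Fin m} :
    (starCliqueGraph k m).Adj (Sum.inr (i, j)) (Sum.inl i') ↔ i' = i := by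
  rw [(starCliqueGraph k m).adj_comm, adj_lr]

lemma neighborSet_inr (i : Fin k) (j : Fin m) :
    (starCliqueGraph k m).neighborSet (Sum.inr (i, j)) = {Sum.inl i} := by
  ext x
  cases x with
  | inl i' =>
      simp [SimpleGraph.mem_neighborSet, adj_rl, Sum.inl.injEq]
  | inr p =>
      have : ¬ (starCliqueGraph k m).Adj (Sum.inr (i,j)) (Sum.inr p) := adj_rr
      simp_all [SimpleGraph.mem_neighborSet]

end SCG

namespace SCG
variable {k m : ℕ}
open Sum

lemma mem_neighborSet_inl {i : Fin k} {x : Fin k ⊕ Fin k × Fin m} :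
    x ∈ (starCliqueGraph k m).neighborSet (Sum.inl i) ↔
      (∃ j : Fin k, x = Sum.inl j ∧ j ≠ i) ∨ (∃ j : Fin m, x = Sum.inr (i, j)) := by
  cases x with
  | inl j =>
      simp only [SimpleGraph.mem_neighborSet, adj_ll]
      constructor
      · intro h; exact Or.inl ⟨j, rfl, fun hji => h hji.symm⟩
      · rintro (⟨j', hj', hne⟩ | ⟨j', hj'⟩)
        · injection hj' with h; subst h; exact fun h => hne h.symm
        · exact absurd hj' (by simp)
  | inr p =>
      obtain ⟨i', j⟩ := p
      simp only [SimpleGraph.mem_neighborSet, adj_lr]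
      constructor
      · rintro rfl; exact Or.inr ⟨j, rfl⟩
      · rintro (⟨j', hj', -⟩ | ⟨j', hj'⟩)
        · exact absurd hj' (by simp)
        · injection hj' with h; injection h with h1 h2; exact h1.symm

lemma clique_mono {d : ℕ} {A B : Set (Fin k ⊕ Fin k × Fin m)}
    (h : IsDCut (starCliqueGraph k m) d A B) (hk : 2 * d + 1 ≤ k) :
    (∀ i : Fin k, Sum.inl i ∈ A) ∨ (∀ i : Fin k, Sum.inl i ∈ B) := by
  obtain ⟨hA, hB, hdisj, huniv, hcA, hcB⟩ := h
  by_contra hcon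
  push_neg at hcon
  obtain ⟨⟨i₀, hi₀⟩, ⟨j₀, hj₀⟩⟩ := hcon
  have hmem : ∀ x : Fin k ⊕ Fin k × Fin m, x ∈ A ∨ x ∈ B := by
    intro x
    have := Set.mem_univ x
    rw [← huniv] at this
    exact this
  have hi₀B : Sum.inl i₀ ∈ B := (hmem _).resolve_left hi₀
  have hj₀A : Sum.inl j₀ ∈ A := (hmem _).resolve_right hj₀
  set SA : Set (Fin k) := {i | Sum.inl i ∈ A} with hSA
  set SB : Set (Fin k) := {i | Sum.inl i ∈ B} with hSB
  have hsub : ∀ {i : Fin k}, Sum.inl i ∈ A →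
      (Sum.inl '' SB : Set (Fin k ⊕ Fin k × Fin m)) ⊆
        (starCliqueGraph k m).neighborSet (Sum.inl i) ∩ B := by
    intro i hiA
    rintro x ⟨j, hj, rfl⟩
    refine ⟨?_, hj⟩
    rw [mem_neighborSet_inl]
    refine Or.inl ⟨j, rfl, ?_⟩
    rintro rfl
    exact (hdisj.ne_of_mem hiA hj) rfl
  have hsub' : ∀ {i : Fin k}, Sum.inl i ∈ B →
      (Sum.inl '' SA : Set (Fin k ⊕ Fin k × Fin m)) ⊆
        (starCliqueGraph k m).neighborSet (Sum.inl i) ∩ A := by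
    intro i hiB
    rintro x ⟨j, hj, rfl⟩
    refine ⟨?_, hj⟩
    rw [mem_neighborSet_inl]
    refine Or.inl ⟨j, rfl, ?_⟩
    rintro rfl
    exact (hdisj.ne_of_mem hj hiB) rfl
  have hSBcard : SB.ncard ≤ d := by
    calc SB.ncard = (Sum.inl '' SB : Set (Fin k ⊕ Fin k × Fin m)).ncard :=
          (Set.ncard_image_of_injective _ Sum.inl_injective).symm
      _ ≤ ((starCliqueGraph k m).neighborSet (Sum.inl j₀) ∩ B).ncard :=
          Set.ncard_le_ncard (hsub hj₀A) (Set.toFinite _)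
      _ ≤ d := hcA _ hj₀A
  have hSAcard : SA.ncard ≤ d := by
    calc SA.ncard = (Sum.inl '' SA : Set (Fin k ⊕ Fin k × Fin m)).ncard :=
          (Set.ncard_image_of_injective _ Sum.inl_injective).symm
      _ ≤ ((starCliqueGraph k m).neighborSet (Sum.inl i₀) ∩ A).ncard :=
          Set.ncard_le_ncard (hsub' hi₀B) (Set.toFinite _)
      _ ≤ d := hcB _ hi₀B
  have hcover : SA ∪ SB = Set.univ := by
    ext i
    simp only [Set.mem_union, Set.mem_univ, iff_true]
    exact hmem (Sum.inl i)
  have : (k : ℕ) ≤ 2 * d := by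
    calc k = (Set.univ : Set (Fin k)).ncard := by simp [Set.ncard_univ]
      _ = (SA ∪ SB).ncard := by rw [hcover]
      _ ≤ SA.ncard + SB.ncard := Set.ncard_union_le _ _
      _ ≤ d + d := Nat.add_le_add hSAcard hSBcard
      _ = 2 * d := by ring
  omega

end SCG

def pendCut (k m : ℕ) (P : Fin k → Set (Fin m)) : Set (Sym2 (Fin k ⊕ Fin k × Fin m)) :=
  ⋃ i : Fin k, (fun j : Fin m => (s(Sum.inl i, Sum.inr (i, j)) :
    Sym2 (Fin k ⊕ Fin k × Fin m))) '' P i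

namespace SCG
variable {k m : ℕ}

lemma pendEdge_inj {i i' : Fin k} {j j' : Fin m}
    (h : (s(Sum.inl i, Sum.inr (i, j)) : Sym2 (Fin k ⊕ Fin k × Fin m)) =
      s(Sum.inl i', Sum.inr (i', j'))) : i = i' ∧ j = j' := by
  rw [Sym2.eq_iff] at h
  rcases h with ⟨h1, h2⟩ | ⟨h1, h2⟩
  · injection h1 with h1
    injection h2 with h2
    injection h2 with h2a h2b
    exact ⟨h1, h2b⟩
  · exact absurd h1 (by simp)

lemma mem_pendCut {P : Fin k → Set (Fin m)} {i : Fin k} {j : Fin m} :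
    (s(Sum.inl i, Sum.inr (i, j)) : Sym2 (Fin k ⊕ Fin k × Fin m)) ∈ pendCut k m P ↔
      j ∈ P i := by
  constructor
  · intro h
    simp only [pendCut, Set.mem_iUnion, Set.mem_image] at h
    obtain ⟨i', j', hj', he⟩ := h
    obtain ⟨rfl, rfl⟩ := pendEdge_inj he.symm
    exact hj'
  · intro h
    simp only [pendCut, Set.mem_iUnion, Set.mem_image]
    exact ⟨i, j, h, rfl⟩

lemma pendCut_mono {P P' : Fin k → Set (Fin m)} (h : ∀ i, P i ⊆ P' i) :
    pendCut k m P ⊆ pendCut k m P' := by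
  intro e he
  simp only [pendCut, Set.mem_iUnion, Set.mem_image] at he ⊢
  obtain ⟨i, j, hj, rfl⟩ := he
  exact ⟨i, j, h i hj, rfl⟩

lemma pendCut_subset_iff {P P' : Fin k → Set (Fin m)} :
    pendCut k m P ⊆ pendCut k m P' ↔ ∀ i, P i ⊆ P' i := by
  constructor
  · intro h i j hj
    exact mem_pendCut.mp (h (mem_pendCut.mpr hj))
  · exact pendCut_mono

lemma pendCut_injective : Function.Injective (pendCut k m) := by
  intro P P' h
  funext i
  ext j
  rw [← @mem_pendCut k m P i j, h, mem_pendCut]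

lemma edgeCut_comm (G : SimpleGraph V) (A B : Set V) : edgeCut G A B = edgeCut G B A := by
  ext e
  simp only [edgeCut, Set.mem_setOf_eq]
  refine and_congr_right fun _ => ?_
  constructor
  · rintro ⟨u, v, rfl, hu, hv⟩
    exact ⟨v, u, Sym2.eq_swap, hv, hu⟩
  · rintro ⟨u, v, rfl, hu, hv⟩
    exact ⟨v, u, Sym2.eq_swap, hv, hu⟩

lemma isDCut_comm {G : SimpleGraph V} {d : ℕ} {A B : Set V} (h : IsDCut G d A B) :
    IsDCut G d B A :=
  ⟨h.2.1, h.1, h.2.2.1.symm, by rw [Set.union_comm]; exact h.2.2.2.1, h.2.2.2.2.2, h.2.2.2.2.1⟩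

/-- For a `d`-cut with the whole clique in `A`, the edge cut is the pendant cut of
`P i = {j | inr (i,j) ∈ B}`. -/
lemma edgeCut_eq_pendCut {d : ℕ} {A B : Set (Fin k ⊕ Fin k × Fin m)}
    (h : IsDCut (starCliqueGraph k m) d A B) (hS : ∀ i : Fin k, Sum.inl i ∈ A) :
    edgeCut (starCliqueGraph k m) A B = pendCut k m (fun i => {j | Sum.inr (i, j) ∈ B}) := by
  obtain ⟨hA, hB, hdisj, huniv, -, -⟩ := h
  ext e
  simp only [edgeCut, Set.mem_setOf_eq]
  constructor
  · rintro ⟨hedge, u, v, rfl, hu, hv⟩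
    have hadj : (starCliqueGraph k m).Adj u v := ((starCliqueGraph k m).mem_edgeSet).mp hedge
    -- v ∈ B cannot be a clique vertex
    obtain i | ⟨i, j⟩ := v
    · exact absurd (hS i) (fun hA' => hdisj.ne_of_mem hA' hv rfl)
    · have : u ∈ (starCliqueGraph k m).neighborSet (Sum.inr (i, j)) := hadj.symm
      rw [neighborSet_inr] at this
      rw [Set.mem_singleton_iff] at this
      subst this
      exact mem_pendCut.mpr hv
  · intro he
    simp only [pendCut, Set.mem_iUnion, Set.mem_image] at he
    obtain ⟨i, j, hj, rfl⟩ := he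
    refine ⟨((starCliqueGraph k m).mem_edgeSet).mpr (adj_lr.mpr rfl), Sum.inl i, Sum.inr (i, j), rfl,
      hS i, hj⟩

end SCG

namespace SCG
variable {k m : ℕ}

def Bset (k m : ℕ) (P : Fin k → Set (Fin m)) : Set (Fin k ⊕ Fin k × Fin m) :=
  {x | ∃ i j, x = Sum.inr (i, j) ∧ j ∈ P i}

lemma inl_notMem_Bset {P : Fin k → Set (Fin m)} {i : Fin k} :
    Sum.inl i ∉ Bset k m P := by
  rintro ⟨i', j', h, -⟩
  exact absurd h (by simp)

lemma inr_mem_Bset {P : Fin k → Set (Fin m)} {i : Fin k} {j : Fin m} :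
    Sum.inr (i, j) ∈ Bset k m P ↔ j ∈ P i := by
  constructor
  · rintro ⟨i', j', h, hj⟩
    injection h with h
    injection h with h1 h2
    subst h1; subst h2
    exact hj
  · intro h; exact ⟨i, j, rfl, h⟩

lemma isDCut_of_P {d : ℕ} (hd : 1 ≤ d) (hk : 2 * d + 1 ≤ k)
    {P : Fin k → Set (Fin m)} (hle : ∀ i, (P i).ncard ≤ d)
    (hne : ∃ i, (P i).Nonempty) :
    IsDCut (starCliqueGraph k m) d (Bset k m P)ᶜ (Bset k m P) := by
  have hk0 : 0 < k := by omega
  refine ⟨⟨Sum.inl ⟨0, hk0⟩, inl_notMem_Bset⟩, ?_, disjoint_compl_left, by simp, ?_, ?_⟩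
  · obtain ⟨i, j, hj⟩ := hne
    exact ⟨Sum.inr (i, j), inr_mem_Bset.mpr hj⟩
  · rintro (i | ⟨i, j⟩) hv
    · have heq : (starCliqueGraph k m).neighborSet (Sum.inl i) ∩ Bset k m P =
          (fun j : Fin m => (Sum.inr (i, j) : Fin k ⊕ Fin k × Fin m)) '' P i := by
        ext x
        constructor
        · rintro ⟨hx, hxB⟩
          rw [mem_neighborSet_inl] at hx
          rcases hx with ⟨j', rfl, -⟩ | ⟨j', rfl⟩
          · exact absurd hxB inl_notMem_Bset
          · exact ⟨j', inr_mem_Bset.mp hxB, rfl⟩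
        · rintro ⟨j', hj', rfl⟩
          exact ⟨mem_neighborSet_inl.mpr (Or.inr ⟨j', rfl⟩), inr_mem_Bset.mpr hj'⟩
      rw [heq, Set.ncard_image_of_injective _ (fun a b h => by injection h with h; injection h)]
      exact hle i
    · rw [neighborSet_inr]
      have : ({Sum.inl i} : Set (Fin k ⊕ Fin k × Fin m)) ∩ Bset k m P = ∅ := by
        rw [Set.eq_empty_iff_forall_notMem]
        rintro x ⟨hx, hxB⟩
        rw [Set.mem_singleton_iff] at hx
        subst hx
        exact inl_notMem_Bset hxB
      rw [this]
      simp
  · rintro (i | ⟨i, j⟩) hv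
    · exact absurd hv inl_notMem_Bset
    · rw [neighborSet_inr]
      calc (({Sum.inl i} : Set (Fin k ⊕ Fin k × Fin m)) ∩ (Bset k m P)ᶜ).ncard
          ≤ ({Sum.inl i} : Set (Fin k ⊕ Fin k × Fin m)).ncard :=
            Set.ncard_le_ncard Set.inter_subset_left (Set.toFinite _)
        _ = 1 := Set.ncard_singleton _
        _ ≤ d := hd

lemma edgeCut_of_P {d : ℕ} (hd : 1 ≤ d) (hk : 2 * d + 1 ≤ k)
    {P : Fin k → Set (Fin m)} (hle : ∀ i, (P i).ncard ≤ d)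
    (hne : ∃ i, (P i).Nonempty) :
    edgeCut (starCliqueGraph k m) (Bset k m P)ᶜ (Bset k m P) = pendCut k m P := by
  rw [edgeCut_eq_pendCut (isDCut_of_P hd hk hle hne) (fun i => inl_notMem_Bset)]
  congr 1
  funext i
  ext j
  simp [inr_mem_Bset]

end SCG

namespace SCG
variable {k m : ℕ}

lemma P_card_le {d : ℕ} {A B : Set (Fin k ⊕ Fin k × Fin m)}
    (h : IsDCut (starCliqueGraph k m) d A B) (hS : ∀ i : Fin k, Sum.inl i ∈ A) (i : Fin k) :
    ({j : Fin m | Sum.inr (i, j) ∈ B}).ncard ≤ d := by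
  have hsub : (fun j : Fin m => (Sum.inr (i, j) : Fin k ⊕ Fin k × Fin m)) ''
      {j | Sum.inr (i, j) ∈ B} ⊆ (starCliqueGraph k m).neighborSet (Sum.inl i) ∩ B := by
    rintro x ⟨j, hj, rfl⟩
    exact ⟨mem_neighborSet_inl.mpr (Or.inr ⟨j, rfl⟩), hj⟩
  calc ({j : Fin m | Sum.inr (i, j) ∈ B}).ncard
      = ((fun j : Fin m => (Sum.inr (i, j) : Fin k ⊕ Fin k × Fin m)) ''
          {j | Sum.inr (i, j) ∈ B}).ncard :=
        (Set.ncard_image_of_injective _ (fun a b hab => by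
          injection hab with hab; injection hab)).symm
    _ ≤ ((starCliqueGraph k m).neighborSet (Sum.inl i) ∩ B).ncard :=
        Set.ncard_le_ncard hsub (Set.toFinite _)
    _ ≤ d := h.2.2.2.2.1 _ (hS i)

/-- Every `d`-cut has edge cut of the form `pendCut P` with all parts of size `≤ d`. -/
lemma dcut_edgeCut {d : ℕ} {A B : Set (Fin k ⊕ Fin k × Fin m)} (hk : 2 * d + 1 ≤ k)
    (h : IsDCut (starCliqueGraph k m) d A B) :
    ∃ P : Fin k → Set (Fin m), (∀ i, (P i).ncard ≤ d) ∧
      edgeCut (starCliqueGraph k m) A B = pendCut k m P := by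
  rcases clique_mono h hk with hS | hS
  · exact ⟨fun i => {j | Sum.inr (i, j) ∈ B}, P_card_le h hS,
      edgeCut_eq_pendCut h hS⟩
  · refine ⟨fun i => {j | Sum.inr (i, j) ∈ A}, P_card_le (isDCut_comm h) hS, ?_⟩
    rw [edgeCut_comm]
    exact edgeCut_eq_pendCut (isDCut_comm h) hS

/-- The edge cut of a maximal `d`-cut is `pendCut P` with all parts of size exactly `d`. -/
lemma maximal_forward {d : ℕ} {A B : Set (Fin k ⊕ Fin k × Fin m)} (hd : 1 ≤ d)
    (hk : 2 * d + 1 ≤ k) (hm : d ≤ m)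
    (h : IsMaximalDCut (starCliqueGraph k m) d A B) :
    ∃ P : Fin k → Set (Fin m), (∀ i, (P i).ncard = d) ∧
      edgeCut (starCliqueGraph k m) A B = pendCut k m P := by
  obtain ⟨hcut, hmax⟩ := h
  obtain ⟨P, hle, hEq⟩ := dcut_edgeCut hk hcut
  refine ⟨P, fun i => ?_, hEq⟩
  by_contra hne
  have hlt : (P i).ncard < d := lt_of_le_of_ne (hle i) hne
  -- find j₀ ∉ P i
  have hPi_ne_univ : P i ≠ Set.univ := by
    intro hu
    rw [hu, Set.ncard_univ, Nat.card_eq_fintype_card, Fintype.card_fin] at hlt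
    omega
  obtain ⟨j₀, hj₀⟩ : ∃ j₀ : Fin m, j₀ ∉ P i := by
    by_contra hcon
    push_neg at hcon
    exact hPi_ne_univ (Set.eq_univ_of_forall hcon)
  set P' : Fin k → Set (Fin m) := Function.update P i (insert j₀ (P i)) with hP'
  have hP'le : ∀ i', (P' i').ncard ≤ d := by
    intro i'
    by_cases hii : i' = i
    · subst hii
      rw [hP', Function.update_self]
      calc (insert j₀ (P i')).ncard ≤ (P i').ncard + 1 :=
            Set.ncard_insert_le _ _
        _ ≤ d := by omega
    · rw [hP', Function.update_of_ne hii]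
      exact hle i'
  have hP'ne : ∃ i', (P' i').Nonempty := by
    refine ⟨i, ?_⟩
    rw [hP', Function.update_self]
    exact ⟨j₀, Set.mem_insert _ _⟩
  have hPsub : ∀ i', P i' ⊆ P' i' := by
    intro i'
    by_cases hii : i' = i
    · subst hii
      rw [hP', Function.update_self]
      exact Set.subset_insert _ _
    · rw [hP', Function.update_of_ne hii]
  have hstrict : pendCut k m P ⊂ pendCut k m P' := by
    refine ⟨pendCut_mono hPsub, fun hsub => ?_⟩
    have : j₀ ∈ P i := by
      have := hsub (mem_pendCut.mpr (show j₀ ∈ P' i by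
        rw [hP', Function.update_self]; exact Set.mem_insert _ _))
      exact mem_pendCut.mp this
    exact hj₀ this
  exact hmax _ _ (isDCut_of_P hd hk hP'le hP'ne)
    (by rw [hEq, edgeCut_of_P hd hk hP'le hP'ne]; exact hstrict)

/-- Conversely, every `pendCut P` with all parts of size `d` is the edge cut of a
maximal `d`-cut. -/
lemma maximal_backward {d : ℕ} (hd : 1 ≤ d) (hk : 2 * d + 1 ≤ k) (hm : d ≤ m)
    {P : Fin k → Set (Fin m)} (hcard : ∀ i, (P i).ncard = d) :
    IsMaximalDCut (starCliqueGraph k m) d (Bset k m P)ᶜ (Bset k m P) ∧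
      edgeCut (starCliqueGraph k m) (Bset k m P)ᶜ (Bset k m P) = pendCut k m P := by
  have hk0 : 0 < k := by omega
  have hle : ∀ i, (P i).ncard ≤ d := fun i => le_of_eq (hcard i)
  have hne : ∃ i, (P i).Nonempty := by
    refine ⟨⟨0, hk0⟩, ?_⟩
    rw [← Set.ncard_pos (Set.toFinite _), hcard]
    omega
  have hEq := edgeCut_of_P hd hk hle hne
  refine ⟨⟨isDCut_of_P hd hk hle hne, ?_⟩, hEq⟩
  rintro A' B' hcut' hss
  rw [hEq] at hss
  obtain ⟨P', hle', hEq'⟩ := dcut_edgeCut hk hcut'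
  rw [hEq'] at hss
  have hsub : ∀ i', P i' ⊆ P' i' := pendCut_subset_iff.mp hss.1
  have : P = P' := by
    funext i'
    exact Set.eq_of_subset_of_ncard_le (hsub i')
      (by rw [hcard]; exact hle' i') (Set.toFinite _)
  subst this
  exact hss.2 le_rfl

end SCG

namespace SCG

lemma card_sets_eq (m d : ℕ) :
    Nat.card {s : Set (Fin m) // s.ncard = d} = m.choose d := by
  have e : {s : Set (Fin m) // s.ncard = d} ≃ {t : Finset (Fin m) // t.card = d} :=
    ((Fintype.finsetEquivSet).subtypeEquiv (fun t => by
      rw [Fintype.finsetEquivSet_apply, Set.ncard_coe_finset])).symm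
  rw [Nat.card_congr e, Nat.card_eq_fintype_card, Fintype.card_finset_len, Fintype.card_fin]

lemma card_P (k m d : ℕ) :
    ({P : Fin k → Set (Fin m) | ∀ i, (P i).ncard = d}).ncard = (m.choose d) ^ k := by
  rw [← Nat.card_coe_set_eq]
  have e : ↥{P : Fin k → Set (Fin m) | ∀ i, (P i).ncard = d} ≃
      ∀ _ : Fin k, {s : Set (Fin m) // s.ncard = d} :=
    Equiv.subtypePiEquivPi (β := fun _ : Fin k => Set (Fin m)) (p := fun _ s => s.ncard = d)
  rw [Nat.card_congr e, Nat.card_pi]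
  simp only [card_sets_eq, Finset.prod_const, Finset.card_univ, Fintype.card_fin]

end SCG


/-- For `d ≥ 1`, `k ≥ 2d+1` and `m ≥ d`, the set of edge cuts of maximal `d`-cuts of
`starCliqueGraph k m` has exactly `(binom(m, d))^k` members, and these are precisely
the edge cuts consisting, for each `sᵢ`, of exactly `d` edges between `sᵢ` and its
pendant neighbors, and no other edges. -/
theorem starCliqueGraph_maximal_dcut_count (d k m : ℕ) (hd : 1 ≤ d)
    (hk : 2 * d + 1 ≤ k) (hm : d ≤ m) :
    ({F : Set (Sym2 (Fin k ⊕ Fin k × Fin m)) |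
        ∃ A B, IsMaximalDCut (starCliqueGraph k m) d A B ∧
          edgeCut (starCliqueGraph k m) A B = F}).ncard = (m.choose d) ^ k ∧
    {F : Set (Sym2 (Fin k ⊕ Fin k × Fin m)) |
        ∃ A B, IsMaximalDCut (starCliqueGraph k m) d A B ∧
          edgeCut (starCliqueGraph k m) A B = F} =
      {F : Set (Sym2 (Fin k ⊕ Fin k × Fin m)) |
        ∃ P : Fin k → Set (Fin m), (∀ i, (P i).ncard = d) ∧
          F = ⋃ i : Fin k,
            (fun j : Fin m => (s(Sum.inl i, Sum.inr (i, j)) :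
              Sym2 (Fin k ⊕ Fin k × Fin m))) '' P i} := by
  have hset : {F : Set (Sym2 (Fin k ⊕ Fin k × Fin m)) |
        ∃ A B, IsMaximalDCut (starCliqueGraph k m) d A B ∧
          edgeCut (starCliqueGraph k m) A B = F} =
      {F : Set (Sym2 (Fin k ⊕ Fin k × Fin m)) |
        ∃ P : Fin k → Set (Fin m), (∀ i, (P i).ncard = d) ∧ F = pendCut k m P} := by
    ext F
    simp only [Set.mem_setOf_eq]
    constructor
    · rintro ⟨A, B, hmax, rfl⟩
      obtain ⟨P, hcard, hEq⟩ := SCG.maximal_forward hd hk hm hmax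
      exact ⟨P, hcard, hEq⟩
    · rintro ⟨P, hcard, rfl⟩
      obtain ⟨hmax, hEq⟩ := SCG.maximal_backward hd hk hm hcard
      exact ⟨_, _, hmax, hEq⟩
  refine ⟨?_, hset⟩
  rw [hset]
  have himg : {F : Set (Sym2 (Fin k ⊕ Fin k × Fin m)) |
        ∃ P : Fin k → Set (Fin m), (∀ i, (P i).ncard = d) ∧ F = pendCut k m P} =
      pendCut k m '' {P : Fin k → Set (Fin m) | ∀ i, (P i).ncard = d} := by
    ext F
    simp only [Set.mem_setOf_eq, Set.mem_image]
    constructor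
    · rintro ⟨P, hP, rfl⟩; exact ⟨P, hP, rfl⟩
    · rintro ⟨P, hP, rfl⟩; exact ⟨P, hP, rfl⟩
  rw [himg, Set.ncard_image_of_injective _ SCG.pendCut_injective, SCG.card_P]
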